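/- Variance bound for contracting real-valued Markov chains: let (Z_t) be a Markov chain taking values in ℝ with transition kernel P, and suppose there exists 0 < ρ < 1 such that for all pairs of starting states (z, z̃) and all t ≥ 0, |E_z[Z_t] − E_{z̃}[Z_t]| ≤ ρ^t |z − z̃|. Then v_t := sup_{z₀} Var_{z₀}(Z_t) satisfies v_t ≤ v₁ · min{t, (1 − ρ²)^{-1}}. -/

import Mathlib

open MeasureTheory ProbabilityTheory ENNReal

namespace CW

noncomputable section

/-- The law at time `t` of the time-homogeneous Markov chain on `ℝ` with
transition kernel `κ`, started from `z`. -/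
def chainLaw (κ : Kernel ℝ ℝ) : ℕ → ℝ → Measure ℝ
  | 0, z => Measure.dirac z
  | t + 1, z => (chainLaw κ t z).bind (fun x => κ x)

variable {κ : Kernel ℝ ℝ} [IsMarkovKernel κ]

lemma chainLaw_one (z : ℝ) : chainLaw κ 1 z = κ z := by
  show (Measure.dirac z).bind (fun x => κ x) = κ z
  exact Measure.dirac_bind κ.measurable z

instance chainLaw_prob (t : ℕ) (z : ℝ) : IsProbabilityMeasure (chainLaw κ t z) := by
  induction t generalizing z with
  | zero => exact Measure.dirac.isProbabilityMeasure
  | succ t ih =>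
    constructor
    show (chainLaw κ t z).bind (fun x => κ x) Set.univ = 1
    rw [Measure.bind_apply MeasurableSet.univ κ.measurable.aemeasurable]
    simp

lemma enn_sq (a : ℝ) : (‖a‖₊ : ℝ≥0∞) ^ 2 = ENNReal.ofReal (a ^ 2) := by
  rw [← sq_abs, ENNReal.ofReal_pow (abs_nonneg a), ← Real.enorm_eq_ofReal_abs]
  rfl

lemma meas_sq : Measurable (fun p : ℝ × ℝ => (‖p.1 - p.2‖₊ : ℝ≥0∞) ^ 2) :=
  ((measurable_fst.sub measurable_snd).nnnorm.coe_nnreal_ennreal).pow_const 2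

lemma integral_sq_sub (μ : Measure ℝ) [IsProbabilityMeasure μ] (h : MemLp id 2 μ) (c : ℝ) :
    ∫ x, (x - c) ^ 2 ∂μ = variance id μ + ((∫ x, x ∂μ) - c) ^ 2 := by
  have hi : Integrable (fun x => x) μ := h.integrable one_le_two
  have hsq : Integrable (fun x => x ^ 2) μ := h.integrable_sq
  have hv := variance_eq_sub h
  simp only [id, Pi.pow_apply] at hv
  have h1 : ∫ x, (x - c) ^ 2 ∂μ = ∫ x, (x ^ 2 - (2 * c) * x + c ^ 2) ∂μ := by
    congr 1; funext x; ring
  have h2 : Integrable (fun x => x ^ 2 - 2 * c * x) μ := hsq.sub ((hi.const_mul (2 * c)))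
  rw [h1, integral_add h2 (integrable_const _),
    integral_sub hsq ((hi.const_mul (2 * c))), integral_const_mul, integral_const]
  simp only [measure_univ, ENNReal.toReal_one, smul_eq_mul, one_mul, probReal_univ]
  rw [hv]; ring
lemma integrable_sq_sub' (μ : Measure ℝ) [IsFiniteMeasure μ] (h : MemLp id 2 μ) (c : ℝ) :
    Integrable (fun x => (x - c) ^ 2) μ := by
  have := (h.sub (memLp_const c)).integrable_sq
  simpa using this

lemma inner_eq (ν : Measure ℝ) [IsProbabilityMeasure ν] (h : MemLp id 2 ν) (x : ℝ) :
    ∫⁻ y, (‖x - y‖₊ : ℝ≥0∞) ^ 2 ∂ν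
      = ENNReal.ofReal (variance id ν + ((∫ y, y ∂ν) - x) ^ 2) := by
  have hint : Integrable (fun y => (y - x) ^ 2) ν := integrable_sq_sub' ν h x
  calc ∫⁻ y, (‖x - y‖₊ : ℝ≥0∞) ^ 2 ∂ν = ∫⁻ y, ENNReal.ofReal ((y - x) ^ 2) ∂ν := by
        simp_rw [enn_sq]
        congr 1; funext y; congr 1; ring
    _ = ENNReal.ofReal (∫ y, (y - x) ^ 2 ∂ν) :=
        (ofReal_integral_eq_lintegral_ofReal hint (ae_of_all _ fun y => sq_nonneg _)).symm
    _ = _ := by rw [integral_sq_sub ν h x]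

lemma inner_top (ν : Measure ℝ) [IsProbabilityMeasure ν] (h : ¬ MemLp id 2 ν) (x : ℝ) :
    ∫⁻ y, (‖x - y‖₊ : ℝ≥0∞) ^ 2 ∂ν = ∞ := by
  by_contra hne
  apply h
  have hmeas : AEStronglyMeasurable (fun y : ℝ => x - y) ν :=
    (measurable_const.sub measurable_id).aestronglyMeasurable
  have hint : Integrable (fun y => (x - y) ^ 2) ν := by
    refine ⟨((measurable_const.sub measurable_id).pow_const 2).aestronglyMeasurable, ?_⟩
    rw [hasFiniteIntegral_iff_ofReal (ae_of_all _ fun y => sq_nonneg _)]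
    simp_rw [← enn_sq]
    exact lt_top_iff_ne_top.2 hne
  have h2 : MemLp (fun y : ℝ => x - y) 2 ν := (memLp_two_iff_integrable_sq hmeas).2 hint
  have h3 : MemLp (fun y : ℝ => x - (x - y)) 2 ν := (memLp_const x).sub h2
  have he : (fun y : ℝ => x - (x - y)) = id := by funext y; simp
  rwa [he] at h3

noncomputable def Dd (μ ν : Measure ℝ) : ℝ≥0∞ := ∫⁻ x, ∫⁻ y, (‖x - y‖₊ : ℝ≥0∞) ^ 2 ∂ν ∂μ

lemma Dd_eq (μ ν : Measure ℝ) [IsProbabilityMeasure μ] [IsProbabilityMeasure ν]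
    (hμ : MemLp id 2 μ) (hν : MemLp id 2 ν) :
    Dd μ ν = ENNReal.ofReal (variance id μ + variance id ν
      + ((∫ x, x ∂μ) - ∫ y, y ∂ν) ^ 2) := by
  have hint : Integrable (fun x => (x - ∫ y, y ∂ν) ^ 2) μ := integrable_sq_sub' μ hμ _
  have hfun : (fun x => variance id ν + ((∫ y, y ∂ν) - x) ^ 2)
      = fun x => variance id ν + (x - ∫ y, y ∂ν) ^ 2 := by funext x; ring_nf
  have hint2 : Integrable (fun x => variance id ν + ((∫ y, y ∂ν) - x) ^ 2) μ := by
    rw [hfun]; exact (integrable_const _).add hint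
  rw [Dd]
  simp_rw [inner_eq ν hν]
  rw [← ofReal_integral_eq_lintegral_ofReal hint2
    (ae_of_all _ fun x => add_nonneg (variance_nonneg _ _) (sq_nonneg _))]
  congr 1
  rw [hfun, integral_add (integrable_const _) hint, integral_const, integral_sq_sub μ hμ]
  simp only [measure_univ, ENNReal.toReal_one, smul_eq_mul, one_mul, probReal_univ]
  ring

lemma Dd_top (μ ν : Measure ℝ) [IsProbabilityMeasure μ] [IsProbabilityMeasure ν]
    (hν : ¬ MemLp id 2 ν) : Dd μ ν = ∞ := by
  rw [Dd]
  simp_rw [inner_top ν hν]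
  simp

lemma Dd_self (μ : Measure ℝ) [IsProbabilityMeasure μ] : Dd μ μ = 2 * evariance id μ := by
  by_cases h : MemLp id 2 μ
  · rw [Dd_eq μ μ h h, sub_self, ← h.ofReal_variance_eq]
    have h2 : (2 : ℝ≥0∞) = ENNReal.ofReal (2 : ℝ) := by norm_num
    rw [h2, ← ENNReal.ofReal_mul (by norm_num : (0:ℝ) ≤ 2)]
    congr 1; ring
  · rw [Dd_top μ μ h, evariance_eq_top aestronglyMeasurable_id h]
    simp

lemma Dd_kernel_le {ρ : ℝ} (hρ0 : 0 ≤ ρ)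
    (hc : ∀ u v : ℝ, |(∫ x, x ∂(κ u)) - ∫ x, x ∂(κ v)| ≤ ρ * |u - v|) (u v : ℝ) :
    Dd (κ u) (κ v) ≤ evariance id (κ u) + evariance id (κ v)
      + ENNReal.ofReal (ρ ^ 2) * (‖u - v‖₊ : ℝ≥0∞) ^ 2 := by
  by_cases hu : MemLp id 2 (κ u)
  · by_cases hv : MemLp id 2 (κ v)
    · rw [Dd_eq _ _ hu hv]
      have habs : ((∫ x, x ∂(κ u)) - ∫ x, x ∂(κ v)) ^ 2 ≤ ρ ^ 2 * (u - v) ^ 2 := by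
        have h1 := hc u v
        have h2 : |(∫ x, x ∂(κ u)) - ∫ x, x ∂(κ v)| ^ 2 ≤ (ρ * |u - v|) ^ 2 :=
          pow_le_pow_left₀ (abs_nonneg _) h1 2
        rw [sq_abs] at h2
        calc ((∫ x, x ∂(κ u)) - ∫ x, x ∂(κ v)) ^ 2 ≤ (ρ * |u - v|) ^ 2 := h2
          _ = ρ ^ 2 * (u - v) ^ 2 := by rw [mul_pow, sq_abs]
      calc ENNReal.ofReal (variance id (κ u) + variance id (κ v)
              + ((∫ x, x ∂(κ u)) - ∫ x, x ∂(κ v)) ^ 2)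
          ≤ ENNReal.ofReal (variance id (κ u)) + ENNReal.ofReal (variance id (κ v))
              + ENNReal.ofReal (((∫ x, x ∂(κ u)) - ∫ x, x ∂(κ v)) ^ 2) :=
            le_trans (ENNReal.ofReal_add_le) (add_le_add_left ENNReal.ofReal_add_le _)
        _ ≤ evariance id (κ u) + evariance id (κ v)
              + ENNReal.ofReal (ρ ^ 2) * (‖u - v‖₊ : ℝ≥0∞) ^ 2 := by
            rw [hu.ofReal_variance_eq, hv.ofReal_variance_eq]
            refine add_le_add_right ?_ _
            rw [enn_sq, ← ENNReal.ofReal_mul (sq_nonneg ρ)]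
            exact ENNReal.ofReal_le_ofReal habs
    · rw [evariance_eq_top aestronglyMeasurable_id hv]
      simp
  · rw [evariance_eq_top aestronglyMeasurable_id hu]
    simp

lemma isProb_bind (ν : Measure ℝ) [IsProbabilityMeasure ν] :
    IsProbabilityMeasure (ν.bind (fun x => κ x)) := by
  constructor
  rw [Measure.bind_apply MeasurableSet.univ κ.measurable.aemeasurable]
  simp

lemma measG : Measurable (fun p : ℝ × ℝ => ∫⁻ y, (‖p.1 - y‖₊ : ℝ≥0∞) ^ 2 ∂(κ p.2)) := by
  have h : Measurable fun p : ℝ × ℝ =>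
      ∫⁻ y, (‖p.1 - y‖₊ : ℝ≥0∞) ^ 2 ∂((Kernel.prodMkLeft ℝ κ) p) := by
    refine Measurable.lintegral_kernel_prod_right ?_
    exact ((measurable_fst.comp measurable_fst).sub measurable_snd).nnnorm.coe_nnreal_ennreal.pow_const 2
  simpa [Kernel.prodMkLeft_apply] using h

lemma Dd_bind (ν : Measure ℝ) [IsProbabilityMeasure ν] :
    Dd (ν.bind (fun x => κ x)) (ν.bind (fun x => κ x))
      = ∫⁻ u, ∫⁻ v, Dd (κ u) (κ v) ∂ν ∂ν := by
  have := isProb_bind (κ := κ) ν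
  set μ := ν.bind (fun x => κ x) with hμ
  have hinner : ∀ x : ℝ, ∫⁻ y, (‖x - y‖₊ : ℝ≥0∞) ^ 2 ∂μ
      = ∫⁻ v, ∫⁻ y, (‖x - y‖₊ : ℝ≥0∞) ^ 2 ∂(κ v) ∂ν := fun x =>
    Measure.lintegral_bind κ.measurable.aemeasurable
      ((measurable_const.sub measurable_id).nnnorm.coe_nnreal_ennreal.pow_const 2).aemeasurable
  have houter : Measurable fun x : ℝ => ∫⁻ v, ∫⁻ y, (‖x - y‖₊ : ℝ≥0∞) ^ 2 ∂(κ v) ∂ν :=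
    Measurable.lintegral_prod_right' (f := fun p : ℝ × ℝ =>
      ∫⁻ y, (‖p.1 - y‖₊ : ℝ≥0∞) ^ 2 ∂(κ p.2)) measG
  calc Dd μ μ = ∫⁻ x, ∫⁻ v, ∫⁻ y, (‖x - y‖₊ : ℝ≥0∞) ^ 2 ∂(κ v) ∂ν ∂μ := by
        rw [Dd]; exact lintegral_congr hinner
    _ = ∫⁻ u, ∫⁻ x, ∫⁻ v, ∫⁻ y, (‖x - y‖₊ : ℝ≥0∞) ^ 2 ∂(κ v) ∂ν ∂(κ u) ∂ν :=
        Measure.lintegral_bind κ.measurable.aemeasurable houter.aemeasurable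
    _ = ∫⁻ u, ∫⁻ v, ∫⁻ x, ∫⁻ y, (‖x - y‖₊ : ℝ≥0∞) ^ 2 ∂(κ v) ∂(κ u) ∂ν ∂ν := by
        refine lintegral_congr fun u => ?_
        exact lintegral_lintegral_swap measG.aemeasurable
    _ = ∫⁻ u, ∫⁻ v, Dd (κ u) (κ v) ∂ν ∂ν := rfl

lemma step_bound {ρ : ℝ} (hρ0 : 0 ≤ ρ)
    (hc : ∀ u v : ℝ, |(∫ x, x ∂(κ u)) - ∫ x, x ∂(κ v)| ≤ ρ * |u - v|)
    (t : ℕ) (z : ℝ) :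
    evariance id (chainLaw κ (t + 1) z) ≤ (⨆ z₀ : ℝ, evariance id (κ z₀))
      + ENNReal.ofReal (ρ ^ 2) * (⨆ z₀ : ℝ, evariance id (chainLaw κ t z₀)) := by
  set V1 := ⨆ z₀ : ℝ, evariance id (κ z₀) with hV1
  set Vt := ⨆ z₀ : ℝ, evariance id (chainLaw κ t z₀) with hVt
  set r := ENNReal.ofReal (ρ ^ 2) with hr
  have key : 2 * evariance id (chainLaw κ (t + 1) z) ≤ 2 * (V1 + r * Vt) := by
    have h1 : 2 * evariance id (chainLaw κ (t + 1) z)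
        = Dd (chainLaw κ (t + 1) z) (chainLaw κ (t + 1) z) := (Dd_self _).symm
    have hbind : chainLaw κ (t + 1) z = (chainLaw κ t z).bind (fun x => κ x) := rfl
    rw [h1, hbind, Dd_bind]
    set ν := chainLaw κ t z with hν
    have hmg : Measurable fun u : ℝ => ∫⁻ v, (‖u - v‖₊ : ℝ≥0∞) ^ 2 ∂ν :=
      Measurable.lintegral_prod_right' meas_sq
    calc ∫⁻ u, ∫⁻ v, Dd (κ u) (κ v) ∂ν ∂ν
        ≤ ∫⁻ u, ∫⁻ v, ((V1 + V1) + r * (‖u - v‖₊ : ℝ≥0∞) ^ 2) ∂ν ∂ν := by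
          refine lintegral_mono fun u => lintegral_mono fun v => ?_
          refine (Dd_kernel_le hρ0 hc u v).trans ?_
          have hu : evariance id (κ u) ≤ V1 := le_iSup (fun z₀ : ℝ => evariance id (κ z₀)) u
          have hv : evariance id (κ v) ≤ V1 := le_iSup (fun z₀ : ℝ => evariance id (κ z₀)) v
          calc evariance id (κ u) + evariance id (κ v) + r * (‖u - v‖₊ : ℝ≥0∞) ^ 2
              ≤ V1 + V1 + r * (‖u - v‖₊ : ℝ≥0∞) ^ 2 := by gcongr
            _ = (V1 + V1) + r * (‖u - v‖₊ : ℝ≥0∞) ^ 2 := rfl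
      _ = (V1 + V1) + r * Dd ν ν := by
          have hin : ∀ u : ℝ, ∫⁻ v, ((V1 + V1) + r * (‖u - v‖₊ : ℝ≥0∞) ^ 2) ∂ν
              = (V1 + V1) + r * ∫⁻ v, (‖u - v‖₊ : ℝ≥0∞) ^ 2 ∂ν := by
            intro u
            rw [lintegral_add_left measurable_const, lintegral_const,
              lintegral_const_mul r (show Measurable fun v : ℝ => (‖u - v‖₊ : ℝ≥0∞) ^ 2 from
                (measurable_const.sub measurable_id).nnnorm.coe_nnreal_ennreal.pow_const 2)]
            simp [measure_univ]
          simp_rw [hin]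
          rw [lintegral_add_left measurable_const, lintegral_const,
            lintegral_const_mul r hmg]
          simp [measure_univ, Dd]
      _ = 2 * V1 + r * (2 * evariance id ν) := by rw [Dd_self ν]; ring
      _ ≤ 2 * V1 + r * (2 * Vt) := by
          gcongr
          exact le_iSup (fun z₀ : ℝ => evariance id (chainLaw κ t z₀)) z
      _ = 2 * (V1 + r * Vt) := by ring
  exact (ENNReal.mul_le_mul_iff_right (by norm_num) (by norm_num)).1 key

lemma evariance_chainLaw_zero (z : ℝ) : evariance id (chainLaw κ 0 z) = 0 := by
  show evariance id (Measure.dirac z) = 0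
  rw [evariance, lintegral_dirac]
  simp [integral_dirac]

lemma sup_le_geom {ρ : ℝ} (hρ0 : 0 ≤ ρ)
    (hc : ∀ u v : ℝ, |(∫ x, x ∂(κ u)) - ∫ x, x ∂(κ v)| ≤ ρ * |u - v|) (t : ℕ) :
    (⨆ z₀ : ℝ, evariance id (chainLaw κ t z₀)) ≤ (⨆ z₀ : ℝ, evariance id (κ z₀))
      * ∑ i ∈ Finset.range t, (ENNReal.ofReal (ρ ^ 2)) ^ i := by
  induction t with
  | zero => simp [evariance_chainLaw_zero]
  | succ t ih =>
    refine iSup_le fun z => ?_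
    refine (step_bound hρ0 hc t z).trans ?_
    set V1 := ⨆ z₀ : ℝ, evariance id (κ z₀)
    set r := ENNReal.ofReal (ρ ^ 2)
    calc V1 + r * (⨆ z₀ : ℝ, evariance id (chainLaw κ t z₀))
        ≤ V1 + r * (V1 * ∑ i ∈ Finset.range t, r ^ i) := by gcongr
      _ = V1 * (r * (∑ i ∈ Finset.range t, r ^ i) + 1) := by ring
      _ = V1 * ∑ i ∈ Finset.range (t + 1), r ^ i := by rw [geom_sum_succ]

lemma geom_le_min {ρ : ℝ} (h0 : 0 < ρ) (h1 : ρ < 1) (t : ℕ) :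
    ∑ i ∈ Finset.range t, (ENNReal.ofReal (ρ ^ 2)) ^ i
      ≤ min (t : ℝ≥0∞) (ENNReal.ofReal (1 - ρ ^ 2)⁻¹) := by
  set r := ENNReal.ofReal (ρ ^ 2) with hr
  have hr1 : r ≤ 1 := ENNReal.ofReal_le_one.2 (by nlinarith)
  refine le_min ?_ ?_
  · calc ∑ i ∈ Finset.range t, r ^ i ≤ ∑ _i ∈ Finset.range t, 1 :=
        Finset.sum_le_sum fun i _ => pow_le_one' hr1 i
      _ = t := by simp
  · refine (ENNReal.sum_le_tsum _).trans ?_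
    rw [ENNReal.tsum_geometric]
    have hsub : (1 : ℝ≥0∞) - r = ENNReal.ofReal (1 - ρ ^ 2) := by
      rw [ENNReal.ofReal_sub _ (sq_nonneg ρ), ENNReal.ofReal_one]
    rw [hsub, ENNReal.ofReal_inv_of_pos (by nlinarith)]

end


/-- Variance bound for contracting real-valued Markov chains: if the chain
`(Z_t)` with kernel `κ` satisfies `|E_z[Z_t] - E_z̃[Z_t]| ≤ ρ^t |z - z̃|` for
some `0 < ρ < 1` and all starting states, then
`v_t := sup_{z₀} Var_{z₀}(Z_t)` satisfies `v_t ≤ v₁ min{t, (1 - ρ²)⁻¹}`. -/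
theorem variance_bound_of_contraction (κ : Kernel ℝ ℝ) [IsMarkovKernel κ]
    (ρ : ℝ) (hρ0 : 0 < ρ) (hρ1 : ρ < 1)
    (hcontr : ∀ (z z' : ℝ) (t : ℕ),
      |(∫ x, x ∂(chainLaw κ t z)) - ∫ x, x ∂(chainLaw κ t z')| ≤
        ρ ^ t * |z - z'|)
    (t : ℕ) :
    (⨆ z₀ : ℝ, evariance id (chainLaw κ t z₀)) ≤
      (⨆ z₀ : ℝ, evariance id (chainLaw κ 1 z₀)) *
        min (t : ℝ≥0∞) (ENNReal.ofReal (1 - ρ ^ 2)⁻¹) := by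
  have hc : ∀ u v : ℝ, |(∫ x, x ∂(κ u)) - ∫ x, x ∂(κ v)| ≤ ρ * |u - v| := by
    intro u v
    have := hcontr u v 1
    simpa [chainLaw_one, pow_one] using this
  have hV1 : (⨆ z₀ : ℝ, evariance id (chainLaw κ 1 z₀))
      = ⨆ z₀ : ℝ, evariance id (κ z₀) := by
    simp only [chainLaw_one]
  rw [hV1]
  exact (sup_le_geom hρ0.le hc t).trans
    (mul_le_mul_right (geom_le_min hρ0 hρ1 t) _)

end CW
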